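/- arXiv:1603.06498 — 2 statements merged into one kernel-verified Lean document; each statement's English description precedes it below -/
import Mathlib

section
/- For every real parameter a > -1 and every x ∈ ℝ, the recurrence 2·F_{a+2}(x) + 2x·F_{a+1}(x) = (a+1)·F_a(x) holds; consequently F_a satisfies the Hermite differential equation F_a''(x) - 2x·F_a'(x) - 2(a+1)·F_a(x) = 0 for all x ∈ ℝ. -/
open MeasureTheory Real
open Set Filter

/-- `Fa a x = ∫₀^∞ exp(-t² - 2xt) · t^a dt`, a Hermite-type function of negative degree. -/
noncomputable def Fa (a x : ℝ) : ℝ :=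
  ∫ t in Set.Ioi (0 : ℝ), Real.exp (-(t ^ 2) - 2 * x * t) * t ^ a

lemma Fa_meas (a x : ℝ) : AEStronglyMeasurable (fun t : ℝ => Real.exp (-(t ^ 2) - 2 * x * t) * t ^ a)
    (volume.restrict (Set.Ioi (0:ℝ))) := by
  refine ContinuousOn.aestronglyMeasurable ?_ measurableSet_Ioi
  refine ((Real.continuous_exp.comp (by continuity)).continuousOn).mul ?_
  exact fun t ht => (Real.continuousAt_rpow_const t a (Or.inl (ne_of_gt ht))).continuousWithinAt

lemma Fa_integrable (a x : ℝ) (ha : -1 < a) :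
    IntegrableOn (fun t : ℝ => Real.exp (-(t ^ 2) - 2 * x * t) * t ^ a) (Set.Ioi 0) := by
  have hg : IntegrableOn (fun t : ℝ => Real.exp ((1 - 2*x)^2/4) * (Real.exp (-t) * t ^ ((a+1)-1)))
      (Set.Ioi 0) := (Real.GammaIntegral_convergent (by linarith)).const_mul _
  refine hg.mono' (Fa_meas a x) ?_
  filter_upwards [ae_restrict_mem measurableSet_Ioi] with t ht
  have ht' : (0:ℝ) < t := ht
  have h1 : (0:ℝ) ≤ t ^ a := Real.rpow_nonneg ht'.le a
  rw [Real.norm_eq_abs, abs_mul, abs_of_nonneg (Real.exp_pos _).le, abs_of_nonneg h1]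
  have h2 : Real.exp (-(t ^ 2) - 2 * x * t) ≤ Real.exp ((1 - 2*x)^2/4) * Real.exp (-t) := by
    rw [← Real.exp_add]
    apply Real.exp_le_exp.2
    nlinarith [sq_nonneg (t - (1 - 2*x)/2)]
  have he : (a+1)-1 = a := by ring
  rw [he]
  calc Real.exp (-(t ^ 2) - 2 * x * t) * t ^ a
      ≤ Real.exp ((1 - 2*x)^2/4) * Real.exp (-t) * t ^ a :=
        mul_le_mul_of_nonneg_right h2 h1
    _ = Real.exp ((1 - 2*x)^2/4) * (Real.exp (-t) * t ^ a) := by ring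

lemma Fa_hasDerivAt (a : ℝ) (ha : -1 < a) (x : ℝ) :
    HasDerivAt (Fa a) (-2 * Fa (a + 1) x) x := by
  have key := hasDerivAt_integral_of_dominated_loc_of_deriv_le (μ := volume.restrict (Set.Ioi (0:ℝ)))
    (F := fun y t => Real.exp (-(t ^ 2) - 2 * y * t) * t ^ a)
    (F' := fun y t => -2 * (Real.exp (-(t ^ 2) - 2 * y * t) * t ^ (a+1)))
    (bound := fun t => 2 * (Real.exp (-(t ^ 2) - 2 * (-(|x|+1)) * t) * t ^ (a+1)))
    (x₀ := x) (Metric.ball_mem_nhds x one_pos)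
    (Filter.Eventually.of_forall fun y => Fa_meas a y)
    (Fa_integrable a x ha)
    ((Fa_meas (a+1) x).const_mul (-2))
    ?_ (((Fa_integrable (a+1) (-(|x|+1)) (by linarith)).const_mul 2)) ?_
  · have h2 := key.2
    rw [MeasureTheory.integral_const_mul] at h2
    exact h2
  · filter_upwards [ae_restrict_mem measurableSet_Ioi] with t ht y hy
    have ht' : (0:ℝ) < t := ht
    have h1 : (0:ℝ) ≤ t ^ (a+1) := Real.rpow_nonneg ht'.le _
    rw [norm_mul, Real.norm_eq_abs, Real.norm_eq_abs, abs_mul,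
      abs_of_nonneg (Real.exp_pos _).le, abs_of_nonneg h1]
    have hxy : -(|x|+1) ≤ y := by
      have hb := abs_lt.1 (by simpa [Real.dist_eq] using Metric.mem_ball.1 hy)
      have hx := neg_abs_le x
      linarith [hb.1]
    have h2 : Real.exp (-(t ^ 2) - 2 * y * t) ≤ Real.exp (-(t ^ 2) - 2 * (-(|x|+1)) * t) := by
      apply Real.exp_le_exp.2
      nlinarith
    have habs : |(-2 : ℝ)| = 2 := by norm_num
    rw [habs]
    exact mul_le_mul_of_nonneg_left (mul_le_mul_of_nonneg_right h2 h1) (by norm_num)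
  · filter_upwards [ae_restrict_mem measurableSet_Ioi] with t ht y hy
    have ht' : (0:ℝ) < t := ht
    have hinner : HasDerivAt (fun y : ℝ => -(t ^ 2) - 2 * y * t) (-(2 * t)) y := by
      have hlin : HasDerivAt (fun y : ℝ => 2 * y * t) (2 * t) y := by
        simpa using ((hasDerivAt_id y).const_mul (2:ℝ)).mul_const t
      simpa using hlin.const_sub (-(t ^ 2))
    have h := hinner.exp.mul_const (t ^ a)
    refine h.congr_deriv ?_
    rw [Real.rpow_add_one (ne_of_gt ht')]
    ring

lemma Fa_rec (a : ℝ) (ha : -1 < a) (x : ℝ) :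
    2 * Fa (a + 2) x + 2 * x * Fa (a + 1) x = (a + 1) * Fa a x := by
  set G : ℝ → ℝ := fun t => Real.exp (-(t ^ 2) - 2 * x * t) * t ^ (a+1) with hG
  set G' : ℝ → ℝ := fun t => (a+1) * (Real.exp (-(t ^ 2) - 2 * x * t) * t ^ a)
    - 2 * (Real.exp (-(t ^ 2) - 2 * x * t) * t ^ (a+2))
    - 2 * x * (Real.exp (-(t ^ 2) - 2 * x * t) * t ^ (a+1)) with hG'
  have I1 : Integrable (fun t : ℝ => (a+1) * (Real.exp (-(t ^ 2) - 2 * x * t) * t ^ a))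
      (volume.restrict (Set.Ioi 0)) := (Fa_integrable a x ha).const_mul (a+1)
  have I2 : Integrable (fun t : ℝ => 2 * (Real.exp (-(t ^ 2) - 2 * x * t) * t ^ (a+2)))
      (volume.restrict (Set.Ioi 0)) := (Fa_integrable (a+2) x (by linarith)).const_mul 2
  have I3 : Integrable (fun t : ℝ => 2 * x * (Real.exp (-(t ^ 2) - 2 * x * t) * t ^ (a+1)))
      (volume.restrict (Set.Ioi 0)) := (Fa_integrable (a+1) x (by linarith)).const_mul (2*x)
  have I12 : Integrable (fun t : ℝ => (a+1) * (Real.exp (-(t ^ 2) - 2 * x * t) * t ^ a)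
      - 2 * (Real.exp (-(t ^ 2) - 2 * x * t) * t ^ (a+2)))
      (volume.restrict (Set.Ioi 0)) := I1.sub I2
  have hcont : ContinuousWithinAt G (Set.Ici 0) 0 := by
    apply ContinuousAt.continuousWithinAt
    exact ((Real.continuous_exp.comp (by continuity)).continuousAt).mul
      (Real.continuousAt_rpow_const 0 (a+1) (Or.inr (by linarith)))
  have hderiv : ∀ t ∈ Set.Ioi (0:ℝ), HasDerivAt G (G' t) t := by
    intro t ht
    have ht' : (0:ℝ) < t := ht
    have h1 : HasDerivAt (fun t : ℝ => t ^ 2) (2 * t) t := by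
      simpa using hasDerivAt_pow 2 t
    have h2 : HasDerivAt (fun t : ℝ => 2 * x * t) (2 * x) t := by
      simpa using (hasDerivAt_id t).const_mul (2*x)
    have hinner : HasDerivAt (fun t : ℝ => -(t ^ 2) - 2 * x * t) (-(2 * t) - 2 * x) t :=
      h1.neg.sub h2
    have h := hinner.exp.mul (Real.hasDerivAt_rpow_const (p := a+1) (Or.inl (ne_of_gt ht')))
    refine h.congr_deriv ?_
    have r1 : t ^ (a + 1) = t ^ a * t := Real.rpow_add_one (ne_of_gt ht') a
    have r2 : t ^ (a + 2) = t ^ (a+1) * t := by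
      rw [show a + 2 = (a+1) + 1 by ring]
      exact Real.rpow_add_one (ne_of_gt ht') (a+1)
    have r3 : a + 1 - 1 = a := by ring
    simp only [hG', r3, r2, r1]
    ring
  have hint : IntegrableOn G' (Set.Ioi 0) := I12.sub I3
  have htop : Tendsto G atTop (nhds 0) := by
    have hb : Tendsto (fun t : ℝ => Real.exp ((1 - 2*x)^2/4) * (t ^ (a+1) * Real.exp (-1 * t)))
        atTop (nhds (Real.exp ((1 - 2*x)^2/4) * 0)) :=
      (tendsto_rpow_mul_exp_neg_mul_atTop_nhds_zero (a+1) 1 one_pos).const_mul _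
    rw [mul_zero] at hb
    apply squeeze_zero' (g := fun t => Real.exp ((1 - 2*x)^2/4) * (t ^ (a+1) * Real.exp (-1 * t)))
      ?_ ?_ hb
    · filter_upwards [eventually_gt_atTop (0:ℝ)] with t ht
      have := Real.rpow_nonneg ht.le (a+1)
      positivity
    · filter_upwards [eventually_gt_atTop (0:ℝ)] with t ht
      have h2 : Real.exp (-(t ^ 2) - 2 * x * t) ≤ Real.exp ((1 - 2*x)^2/4) * Real.exp (-1 * t) := by
        rw [← Real.exp_add]
        apply Real.exp_le_exp.2
        nlinarith [sq_nonneg (t - (1 - 2*x)/2)]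
      calc G t ≤ (Real.exp ((1 - 2*x)^2/4) * Real.exp (-1 * t)) * t ^ (a+1) :=
            mul_le_mul_of_nonneg_right h2 (Real.rpow_nonneg ht.le _)
        _ = Real.exp ((1 - 2*x)^2/4) * (t ^ (a+1) * Real.exp (-1 * t)) := by ring
  have h0 : G 0 = 0 := by
    simp [hG, Real.zero_rpow (by linarith : a + 1 ≠ 0)]
  have key := integral_Ioi_of_hasDerivAt_of_tendsto hcont hderiv hint htop
  rw [h0, sub_zero] at key
  have hsplit : ∫ t in Set.Ioi (0:ℝ), G' t
      = (a+1) * Fa a x - 2 * Fa (a+2) x - 2 * x * Fa (a+1) x := by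
    rw [hG']
    rw [MeasureTheory.integral_sub I12 I3, MeasureTheory.integral_sub I1 I2,
      MeasureTheory.integral_const_mul, MeasureTheory.integral_const_mul,
      MeasureTheory.integral_const_mul]
    rfl
  rw [hsplit] at key
  linarith

/-- The recurrence `2·F_{a+2}(x) + 2x·F_{a+1}(x) = (a+1)·F_a(x)`, and consequently the
Hermite differential equation `F_a''(x) - 2x·F_a'(x) - 2(a+1)·F_a(x) = 0`. -/
theorem Fa_recurrence_and_ODE (a : ℝ) (ha : -1 < a) (x : ℝ) :
    2 * Fa (a + 2) x + 2 * x * Fa (a + 1) x = (a + 1) * Fa a x ∧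
    deriv (deriv (Fa a)) x - 2 * x * deriv (Fa a) x - 2 * (a + 1) * Fa a x = 0 := by
  refine ⟨Fa_rec a ha x, ?_⟩
  have hd1 : deriv (Fa a) = fun y => -2 * Fa (a+1) y :=
    funext fun y => (Fa_hasDerivAt a ha y).deriv
  have hd1x : deriv (Fa a) x = -2 * Fa (a+1) x := (Fa_hasDerivAt a ha x).deriv
  have hd2 : deriv (deriv (Fa a)) x = -2 * (-2 * Fa (a+2) x) := by
    rw [hd1]
    have hr : (a:ℝ) + 1 + 1 = a + 2 := by ring
    have := ((Fa_hasDerivAt (a+1) (by linarith) x).const_mul (-2)).deriv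
    rw [hr] at this
    exact this
  have hrec := Fa_rec a ha x
  rw [hd2, hd1x]
  linarith
end

section
/- Let f : ℝ → ℝ be twice continuously differentiable, let Θ > 0, and let 𝕪 : [0,Θ] → ℝ be differentiable with M₁'(𝕪(ℓ)) ≠ 0 and 𝕪'(ℓ) = M₂(𝕪(ℓ))/M₁'(𝕪(ℓ)) for all ℓ ∈ [0,Θ]. Define 𝕣(ℓ) := ∫₀^ℓ (1 - 𝕪'(x)) · (Φ'(𝕪(x))/Φ(𝕪(x))) dx. Then the function ℓ ↦ exp(𝕣(ℓ)) · Φ(𝕪(ℓ)) · M₂(𝕪(ℓ)) is constant on [0,Θ]. -/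
open MeasureTheory Real Filter Set Topology
set_option linter.unusedSectionVars false
set_option maxHeartbeats 1000000

lemma aux_cont (x b : ℝ) : ContinuousOn (fun t : ℝ => Real.exp (-(t ^ 2) - 2 * x * t) * t ^ b) (Ioi 0) := by
  apply ContinuousOn.mul
  · exact (Continuous.comp Real.continuous_exp (by continuity)).continuousOn
  · exact fun t ht => (Real.continuousAt_rpow_const t b (Or.inl (ne_of_gt ht))).continuousWithinAt

lemma aux_integrable (b x : ℝ) (hb : -1 < b) :
    IntegrableOn (fun t : ℝ => Real.exp (-(t ^ 2) - 2 * x * t) * t ^ b) (Ioi 0) := by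
  have hmeas : ∀ s : Set ℝ, MeasurableSet s → s ⊆ Ioi 0 →
      AEStronglyMeasurable (fun t : ℝ => Real.exp (-(t ^ 2) - 2 * x * t) * t ^ b)
        (volume.restrict s) := fun s hs hsub =>
    ((aux_cont x b).mono hsub).aestronglyMeasurable hs
  have h1 : IntegrableOn (fun t : ℝ => Real.exp (-(t ^ 2) - 2 * x * t) * t ^ b) (Ioc 0 1) := by
    have hint : IntegrableOn (fun t : ℝ => Real.exp (1 + 2 * |x|) * t ^ b) (Ioc 0 1) := by
      exact ((intervalIntegral.intervalIntegrable_rpow' (a := 0) (b := 1) hb).1).const_mul _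
    refine hint.mono' (hmeas _ measurableSet_Ioc Ioc_subset_Ioi_self) ?_
    filter_upwards [ae_restrict_mem measurableSet_Ioc] with t ht
    rw [norm_mul, Real.norm_eq_abs, Real.abs_exp, Real.norm_eq_abs,
      abs_of_nonneg (Real.rpow_nonneg (le_of_lt ht.1) b)]
    apply mul_le_mul_of_nonneg_right _ (Real.rpow_nonneg (le_of_lt ht.1) b)
    apply Real.exp_le_exp.2
    have h2 : |2 * x * t| ≤ 2 * |x| := by
      rw [abs_mul]
      calc |2 * x| * |t| ≤ |2 * x| * 1 := by
            apply mul_le_mul_of_nonneg_left _ (abs_nonneg _)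
            rw [abs_of_nonneg (le_of_lt ht.1)]; exact ht.2
        _ = 2 * |x| := by rw [abs_mul, abs_two, mul_one]
    nlinarith [neg_abs_le (2 * x * t), sq_nonneg t, ht.1.le]
  have h2 : IntegrableOn (fun t : ℝ => Real.exp (-(t ^ 2) - 2 * x * t) * t ^ b) (Ioi 1) := by
    set C : ℝ := 2 * |x| + |b| with hC
    have hint : IntegrableOn (fun t : ℝ => Real.exp (-(t - C/2) ^ 2) * Real.exp (C^2/4)) (Ioi 1) := by
      apply Integrable.integrableOn
      have : Integrable (fun t : ℝ => Real.exp (-(1:ℝ) * t ^ 2)) := integrable_exp_neg_mul_sq one_pos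
      have := (this.comp_sub_right (C/2)).mul_const (Real.exp (C^2/4))
      simpa using this
    refine hint.mono' (hmeas _ measurableSet_Ioi (fun t ht => Set.mem_Ioi.2 (lt_trans one_pos (Set.mem_Ioi.1 ht)))) ?_
    filter_upwards [ae_restrict_mem measurableSet_Ioi] with t ht
    have ht0 : (0:ℝ) < t := lt_trans one_pos ht
    rw [norm_mul, Real.norm_eq_abs, Real.abs_exp, Real.norm_eq_abs,
      abs_of_nonneg (Real.rpow_nonneg ht0.le b), ← Real.exp_add]
    have htb : t ^ b ≤ Real.exp (|b| * t) := by
      rw [Real.rpow_def_of_pos ht0]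
      apply Real.exp_le_exp.2
      rw [mul_comm]
      calc b * Real.log t ≤ |b * Real.log t| := le_abs_self _
        _ = |b| * Real.log t := by
            rw [abs_mul, abs_of_nonneg (Real.log_nonneg ht.le)]
        _ ≤ |b| * t := by
            apply mul_le_mul_of_nonneg_left _ (abs_nonneg _)
            linarith [Real.log_le_sub_one_of_pos ht0]
    calc Real.exp (-(t ^ 2) - 2 * x * t) * t ^ b
        ≤ Real.exp (-(t ^ 2) - 2 * x * t) * Real.exp (|b| * t) := by
          exact mul_le_mul_of_nonneg_left htb (Real.exp_pos _).le
      _ = Real.exp (-(t ^ 2) - 2 * x * t + |b| * t) := (Real.exp_add _ _).symm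
      _ ≤ Real.exp (-(t - C/2) ^ 2 + C^2/4) := by
          apply Real.exp_le_exp.2
          have : -2 * x * t ≤ 2 * |x| * t := by nlinarith [neg_abs_le x, ht0.le]
          nlinarith
  have : Ioi (0:ℝ) = Ioc 0 1 ∪ Ioi 1 := by
    rw [Ioc_union_Ioi_eq_Ioi]; exact zero_le_one
  rw [this]
  exact h1.union h2

lemma fa_pos (b x : ℝ) (hb : -1 < b) : 0 < Fa b x := by
  rw [Fa, setIntegral_pos_iff_support_of_nonneg_ae _ (aux_integrable b x hb)]
  · have hsub : Ioi (0:ℝ) ⊆ Function.support (fun t : ℝ => Real.exp (-(t ^ 2) - 2 * x * t) * t ^ b) := by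
      intro t ht
      exact ne_of_gt (mul_pos (Real.exp_pos _) (Real.rpow_pos_of_pos ht b))
    rw [Set.inter_eq_right.2 hsub]
    simp
  · filter_upwards [ae_restrict_mem measurableSet_Ioi] with t ht
    exact le_of_lt (mul_pos (Real.exp_pos _) (Real.rpow_pos_of_pos ht b))

lemma fa_shift (b x : ℝ) :
    Fa (b+1) x = ∫ t in Set.Ioi (0:ℝ), t * (Real.exp (-(t ^ 2) - 2 * x * t) * t ^ b) := by
  rw [Fa]
  apply setIntegral_congr_fun measurableSet_Ioi
  intro t ht
  have ht0 : (0:ℝ) < t := ht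
  dsimp only
  rw [Real.rpow_add ht0, Real.rpow_one]; ring

lemma fa_hasDerivAt (b : ℝ) (hb : -1 < b) (x₀ : ℝ) :
    HasDerivAt (fun x => Fa b x) (-2 * Fa (b+1) x₀) x₀ := by
  have key := hasDerivAt_integral_of_dominated_loc_of_deriv_le (μ := volume.restrict (Ioi 0))
    (F := fun x t => Real.exp (-(t ^ 2) - 2 * x * t) * t ^ b)
    (F' := fun x t => (-2 * t) * (Real.exp (-(t ^ 2) - 2 * x * t) * t ^ b))
    (x₀ := x₀) (bound := fun t => 2 * (Real.exp (-(t ^ 2) - 2 * (-(|x₀| + 1)) * t) * t ^ (b+1)))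
    (s := Metric.ball x₀ 1) (Metric.ball_mem_nhds x₀ one_pos) ?_ ?_ ?_ ?_ ?_ ?_
  · have : HasDerivAt (fun x => Fa b x)
        (∫ t in Ioi (0:ℝ), (-2 * t) * (Real.exp (-(t ^ 2) - 2 * x₀ * t) * t ^ b)) x₀ := key.2
    convert this using 1
    rw [fa_shift, ← integral_const_mul]
    apply setIntegral_congr_fun measurableSet_Ioi
    intro t ht; ring
  · filter_upwards with x
    exact ((aux_cont x b).aestronglyMeasurable measurableSet_Ioi)
  · exact aux_integrable b x₀ hb
  · apply (ContinuousOn.aestronglyMeasurable _ measurableSet_Ioi)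
    exact (continuousOn_const.mul continuousOn_id).mul (aux_cont x₀ b)
  · filter_upwards [ae_restrict_mem measurableSet_Ioi] with t ht x hx
    have ht0 : (0:ℝ) < t := ht
    rw [norm_mul, norm_mul, norm_mul]
    simp only [Real.norm_eq_abs, Real.abs_exp]
    rw [abs_of_nonneg (Real.rpow_nonneg ht0.le b), abs_of_pos ht0, abs_neg, abs_two]
    have h1 : Real.exp (-(t ^ 2) - 2 * x * t) ≤ Real.exp (-(t ^ 2) - 2 * (-(|x₀| + 1)) * t) := by
      apply Real.exp_le_exp.2
      have hxb : -(|x₀| + 1) ≤ x := by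
        have := abs_lt.1 (by simpa [Real.dist_eq] using Metric.mem_ball.1 hx)
        linarith [neg_abs_le x₀]
      nlinarith
    calc 2 * t * (Real.exp (-(t ^ 2) - 2 * x * t) * t ^ b)
        ≤ 2 * t * (Real.exp (-(t ^ 2) - 2 * (-(|x₀| + 1)) * t) * t ^ b) := by
          apply mul_le_mul_of_nonneg_left _ (by positivity)
          exact mul_le_mul_of_nonneg_right h1 (Real.rpow_nonneg ht0.le b)
      _ = 2 * (Real.exp (-(t ^ 2) - 2 * (-(|x₀| + 1)) * t) * t ^ (b+1)) := by
          rw [Real.rpow_add ht0, Real.rpow_one]; ring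
  · exact (aux_integrable (b+1) (-(|x₀|+1)) (by linarith)).const_mul 2
  · filter_upwards [ae_restrict_mem measurableSet_Ioi] with t ht x hx
    have : HasDerivAt (fun x : ℝ => Real.exp (-(t ^ 2) - 2 * x * t)) 
        ((-2 * t) * Real.exp (-(t ^ 2) - 2 * x * t)) x := by
      have h2 : HasDerivAt (fun x : ℝ => -(t ^ 2) - 2 * x * t) (-2 * t) x := by
        simpa using ((hasDerivAt_id x).const_mul (2:ℝ)).mul_const t |>.const_sub (-(t^2))
      simpa [mul_comm] using h2.exp
    simpa [mul_assoc] using this.mul_const (t ^ b)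

lemma fa_cs (b x : ℝ) (hb : -1 < b) : Fa (b+1) x ^ 2 < Fa b x * Fa (b+2) x := by
  set A := Fa b x with hA
  set B := Fa (b+1) x with hB
  set C := Fa (b+2) x with hC
  have hApos : 0 < A := fa_pos b x hb
  set l := B / A with hl
  set e : ℝ → ℝ := fun t => Real.exp (-(t ^ 2) - 2 * x * t) with he
  have i0 : IntegrableOn (fun t : ℝ => e t * t ^ b) (Ioi 0) := aux_integrable b x hb
  have i1 : IntegrableOn (fun t : ℝ => e t * t ^ (b+1)) (Ioi 0) :=
    aux_integrable (b+1) x (by linarith)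
  have i2 : IntegrableOn (fun t : ℝ => e t * t ^ (b+2)) (Ioi 0) :=
    aux_integrable (b+2) x (by linarith)
  have hH : IntegrableOn (fun t : ℝ =>
      e t * t ^ (b+2) - (2*l) * (e t * t ^ (b+1)) + l^2 * (e t * t ^ b)) (Ioi 0) := by
    exact (i2.sub (i1.const_mul _)).add (i0.const_mul _)
  have heq : EqOn (fun t : ℝ =>
      e t * t ^ (b+2) - (2*l) * (e t * t ^ (b+1)) + l^2 * (e t * t ^ b))
      (fun t : ℝ => (t - l)^2 * (e t * t ^ b)) (Ioi 0) := by
    intro t ht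
    have ht0 : (0:ℝ) < t := ht
    dsimp only
    rw [show b + 2 = b + 1 + 1 by ring, Real.rpow_add ht0, Real.rpow_add ht0, Real.rpow_one]
    ring
  have hh : IntegrableOn (fun t : ℝ => (t - l)^2 * (e t * t ^ b)) (Ioi 0) :=
    hH.congr_fun heq measurableSet_Ioi
  have hpos : 0 < ∫ t in Ioi (0:ℝ), (t - l)^2 * (e t * t ^ b) := by
    rw [setIntegral_pos_iff_support_of_nonneg_ae _ hh]
    · have hsub : Ioi (0:ℝ) \ {l} ⊆
          Function.support (fun t : ℝ => (t - l)^2 * (e t * t ^ b)) ∩ Ioi 0 := by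
        rintro t ⟨ht, htl⟩
        refine ⟨?_, ht⟩
        have : t - l ≠ 0 := sub_ne_zero.2 htl
        exact ne_of_gt (mul_pos (by positivity) (mul_pos (Real.exp_pos _)
          (Real.rpow_pos_of_pos ht b)))
      calc (0:ENNReal) < volume (Ioi (0:ℝ) \ {l}) := by
            rw [measure_diff_null (volume_singleton), Real.volume_Ioi]
            exact ENNReal.zero_lt_top
        _ ≤ _ := measure_mono hsub
    · filter_upwards [ae_restrict_mem measurableSet_Ioi] with t ht
      have ht0 : (0:ℝ) < t := ht
      exact mul_nonneg (sq_nonneg _) (mul_nonneg (Real.exp_pos _).le (Real.rpow_nonneg ht0.le b))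
  have hint : (∫ t in Ioi (0:ℝ), (t - l)^2 * (e t * t ^ b)) = C - 2*l*B + l^2*A := by
    have i3 : IntegrableOn (fun t : ℝ =>
        e t * t ^ (b+2) - (2*l) * (e t * t ^ (b+1))) (Ioi 0) := i2.sub (i1.const_mul _)
    have i0' : IntegrableOn (fun t : ℝ => l^2 * (e t * t ^ b)) (Ioi 0) := i0.const_mul _
    rw [← setIntegral_congr_fun measurableSet_Ioi heq, integral_add i3 i0',
      integral_sub i2 (i1.const_mul _), integral_const_mul, integral_const_mul]
    rfl
  rw [hint] at hpos
  have key : A * (C - 2*l*B + l^2*A) = A*C - B^2 := by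
    rw [hl]; field_simp; ring
  nlinarith [mul_pos hApos hpos, key]

/-- `Phi β σh δ c x = F_a(u(x))` with `a = δ/β - 1` and `u(x) = (c - βx)/(√β·σ̂)`. -/
noncomputable def Phi (β σh δ c : ℝ) (x : ℝ) : ℝ :=
  Fa (δ / β - 1) ((c - β * x) / (Real.sqrt β * σh))

/-- `M₁ = (f·Φ' - f'·Φ)/D` with `D = (Φ')² - Φ·Φ''`. -/
noncomputable def M1 (β σh δ c : ℝ) (f : ℝ → ℝ) (y : ℝ) : ℝ :=
  (f y * deriv (Phi β σh δ c) y - deriv f y * Phi β σh δ c y) /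
    ((deriv (Phi β σh δ c) y) ^ 2 - Phi β σh δ c y * deriv (deriv (Phi β σh δ c)) y)

/-- `M₂ = (f'·Φ' - f·Φ'')/D` with `D = (Φ')² - Φ·Φ''`. -/
noncomputable def M2 (β σh δ c : ℝ) (f : ℝ → ℝ) (y : ℝ) : ℝ :=
  (deriv f y * deriv (Phi β σh δ c) y - f y * deriv (deriv (Phi β σh δ c)) y) /
    ((deriv (Phi β σh δ c) y) ^ 2 - Phi β σh δ c y * deriv (deriv (Phi β σh δ c)) y)


section Setup

variable (β σh δ c : ℝ)

/-- u(x) -/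
noncomputable def Uu (x : ℝ) : ℝ := (c - β * x) / (Real.sqrt β * σh)
/-- -u' -/
noncomputable def Kk : ℝ := β / (Real.sqrt β * σh)

noncomputable def G0 (x : ℝ) : ℝ := Fa (δ / β - 1) (Uu β σh c x)
noncomputable def G1 (x : ℝ) : ℝ := Fa (δ / β - 1 + 1) (Uu β σh c x)
noncomputable def G2 (x : ℝ) : ℝ := Fa (δ / β - 1 + 2) (Uu β σh c x)
noncomputable def G3 (x : ℝ) : ℝ := Fa (δ / β - 1 + 3) (Uu β σh c x)

variable {β σh δ c}
variable (hβ : 0 < β) (hσ : 0 < σh) (hδ : 0 < δ)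
include hβ hσ hδ

lemma hs0 : 0 < Real.sqrt β * σh := mul_pos (Real.sqrt_pos.2 hβ) hσ

lemma hK0 : 0 < Kk β σh := div_pos hβ (hs0 hβ hσ hδ)

lemma ha1 : -1 < δ / β - 1 := by
  have : 0 < δ / β := div_pos hδ hβ
  linarith

lemma hUd (x : ℝ) : HasDerivAt (Uu β σh c) (-Kk β σh) x := by
  have h1 : HasDerivAt (fun x : ℝ => c - β * x) (-β) x := by
    simpa using ((hasDerivAt_id x).const_mul β).const_sub c
  have := h1.div_const (Real.sqrt β * σh)
  unfold Uu Kk; simpa [neg_div] using this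

lemma hG0d (x : ℝ) : HasDerivAt (G0 β σh δ c) (2 * Kk β σh * G1 β σh δ c x) x := by
  have h := (fa_hasDerivAt _ (ha1 hβ hσ hδ) (Uu β σh c x)).comp x (hUd hβ hσ hδ x)
  simp only [Function.comp_def] at h
  refine h.congr_deriv ?_
  simp only [G1]; ring

lemma hG1d (x : ℝ) : HasDerivAt (G1 β σh δ c) (2 * Kk β σh * G2 β σh δ c x) x := by
  have h := (fa_hasDerivAt _ (by linarith [ha1 hβ hσ hδ] : (-1:ℝ) < δ/β - 1 + 1)
    (Uu β σh c x)).comp x (hUd hβ hσ hδ x)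
  simp only [Function.comp_def] at h
  refine h.congr_deriv ?_
  rw [G2, show δ/β - 1 + 2 = δ/β - 1 + 1 + 1 by ring]; ring

lemma hG2d (x : ℝ) : HasDerivAt (G2 β σh δ c) (2 * Kk β σh * G3 β σh δ c x) x := by
  have h := (fa_hasDerivAt _ (by linarith [ha1 hβ hσ hδ] : (-1:ℝ) < δ/β - 1 + 2)
    (Uu β σh c x)).comp x (hUd hβ hσ hδ x)
  simp only [Function.comp_def] at h
  refine h.congr_deriv ?_
  rw [G3, show δ/β - 1 + 3 = δ/β - 1 + 2 + 1 by ring]; ring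

lemma hG0pos (x : ℝ) : 0 < G0 β σh δ c x := fa_pos _ _ (ha1 hβ hσ hδ)
lemma hG1pos (x : ℝ) : 0 < G1 β σh δ c x := fa_pos _ _ (by linarith [ha1 hβ hσ hδ])
lemma hG2pos (x : ℝ) : 0 < G2 β σh δ c x := fa_pos _ _ (by linarith [ha1 hβ hσ hδ])

lemma hCS (x : ℝ) : G1 β σh δ c x ^ 2 < G0 β σh δ c x * G2 β σh δ c x := by
  have := fa_cs (δ/β - 1) (Uu β σh c x) (ha1 hβ hσ hδ)
  rw [G0, G1, G2]
  convert this using 3 <;> ring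

lemma phi_eq : Phi β σh δ c = G0 β σh δ c := rfl

lemma phi_deriv : deriv (Phi β σh δ c) = fun x => 2 * Kk β σh * G1 β σh δ c x := by
  funext x
  rw [phi_eq hβ hσ hδ]
  exact (hG0d hβ hσ hδ x).deriv

lemma phi_deriv2 : deriv (deriv (Phi β σh δ c)) =
    fun x => 2 * Kk β σh * (2 * Kk β σh * G2 β σh δ c x) := by
  funext x
  rw [phi_deriv hβ hσ hδ]
  exact (((hG1d hβ hσ hδ x)).const_mul (2 * Kk β σh)).deriv

/-- the denominator D -/
noncomputable def Dd (x : ℝ) : ℝ :=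
  (2 * Kk β σh * G1 β σh δ c x) ^ 2 -
    G0 β σh δ c x * (2 * Kk β σh * (2 * Kk β σh * G2 β σh δ c x))

lemma hDneg (x : ℝ) : Dd (β := β) (σh := σh) (δ := δ) (c := c) x < 0 := by
  have h1 := hCS hβ hσ hδ (c := c) x
  have hk := hK0 hβ hσ hδ
  rw [Dd]
  nlinarith [mul_pos (mul_pos hk hk) (sub_pos.2 h1)]

lemma hDne (x : ℝ) : Dd (β := β) (σh := σh) (δ := δ) (c := c) x ≠ 0 :=
  ne_of_lt (hDneg hβ hσ hδ x)

end Setup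

section Main
variable {β σh δ c : ℝ} {f : ℝ → ℝ}

noncomputable def N1 (β σh δ c : ℝ) (f : ℝ → ℝ) (y : ℝ) : ℝ :=
  f y * (2 * Kk β σh * G1 β σh δ c y) - deriv f y * G0 β σh δ c y
noncomputable def N2 (β σh δ c : ℝ) (f : ℝ → ℝ) (y : ℝ) : ℝ :=
  deriv f y * (2 * Kk β σh * G1 β σh δ c y) -
    f y * (2 * Kk β σh * (2 * Kk β σh * G2 β σh δ c y))
noncomputable def DDp (β σh δ c : ℝ) (y : ℝ) : ℝ :=
  2 * Kk β σh * G1 β σh δ c y * (2 * Kk β σh * (2 * Kk β σh * G2 β σh δ c y)) -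
    G0 β σh δ c y * (2 * Kk β σh * (2 * Kk β σh * (2 * Kk β σh * G3 β σh δ c y)))
noncomputable def N1D (β σh δ c : ℝ) (f : ℝ → ℝ) (y : ℝ) : ℝ :=
  f y * (2 * Kk β σh * (2 * Kk β σh * G2 β σh δ c y)) -
    deriv (deriv f) y * G0 β σh δ c y
noncomputable def N2D (β σh δ c : ℝ) (f : ℝ → ℝ) (y : ℝ) : ℝ :=
  deriv (deriv f) y * (2 * Kk β σh * G1 β σh δ c y) -
    f y * (2 * Kk β σh * (2 * Kk β σh * (2 * Kk β σh * G3 β σh δ c y)))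
noncomputable def M1D (β σh δ c : ℝ) (f : ℝ → ℝ) (y : ℝ) : ℝ :=
  (N1D β σh δ c f y * Dd (β := β) (σh := σh) (δ := δ) (c := c) y -
    N1 β σh δ c f y * DDp β σh δ c y) / (Dd (β := β) (σh := σh) (δ := δ) (c := c) y) ^ 2
noncomputable def M2D (β σh δ c : ℝ) (f : ℝ → ℝ) (y : ℝ) : ℝ :=
  (N2D β σh δ c f y * Dd (β := β) (σh := σh) (δ := δ) (c := c) y -
    N2 β σh δ c f y * DDp β σh δ c y) / (Dd (β := β) (σh := σh) (δ := δ) (c := c) y) ^ 2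

variable (hβ : 0 < β) (hσ : 0 < σh) (hδ : 0 < δ) (hf : ContDiff ℝ 2 f)
include hβ hσ hδ

lemma m1_eq (f : ℝ → ℝ) : M1 β σh δ c f =
    fun y => N1 β σh δ c f y / Dd (β := β) (σh := σh) (δ := δ) (c := c) y := by
  funext y
  simp only [M1, phi_deriv2 hβ hσ hδ]
  simp only [phi_deriv hβ hσ hδ]
  simp only [phi_eq hβ hσ hδ, N1, Dd]

lemma m2_eq (f : ℝ → ℝ) : M2 β σh δ c f =
    fun y => N2 β σh δ c f y / Dd (β := β) (σh := σh) (δ := δ) (c := c) y := by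
  funext y
  simp only [M2, phi_deriv2 hβ hσ hδ]
  simp only [phi_deriv hβ hσ hδ]
  simp only [phi_eq hβ hσ hδ, N2, Dd]

omit hβ hσ hδ
include hf
lemma hfd1 : Differentiable ℝ f :=
  hf.differentiable (by norm_num)

lemma hf_step : ContDiff ℝ 1 (deriv f) := by
  have h2 : ContDiff ℝ (1 + 1 : ℕ) f := by exact_mod_cast hf
  exact ((contDiff_succ_iff_deriv).mp h2).2.2

lemma hfd2 : Differentiable ℝ (deriv f) :=
  (contDiff_one_iff_deriv.mp (hf_step hf)).1

lemma hfc2 : Continuous (deriv (deriv f)) :=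
  (contDiff_one_iff_deriv.mp (hf_step hf)).2

omit hf
include hβ hσ hδ

lemma hDdd (y : ℝ) :
    HasDerivAt (Dd (β := β) (σh := σh) (δ := δ) (c := c)) (DDp β σh δ c y) y := by
  have h := (((hG1d hβ hσ hδ (c := c) y).const_mul (2 * Kk β σh)).pow 2).sub
    ((hG0d hβ hσ hδ (c := c) y).mul
      (((hG2d hβ hσ hδ (c := c) y).const_mul (2 * Kk β σh)).const_mul (2 * Kk β σh)))
  refine h.congr_deriv ?_
  rw [DDp]; push_cast; ring

include hf

lemma hN1d (y : ℝ) : HasDerivAt (N1 β σh δ c f) (N1D β σh δ c f y) y := by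
  have h := (((hfd1 hf).differentiableAt.hasDerivAt).mul
      ((hG1d hβ hσ hδ (c := c) y).const_mul (2 * Kk β σh))).sub
    (((hfd2 hf).differentiableAt.hasDerivAt).mul (hG0d hβ hσ hδ (c := c) y))
  refine h.congr_deriv ?_
  rw [N1D]; ring

lemma hN2d (y : ℝ) : HasDerivAt (N2 β σh δ c f) (N2D β σh δ c f y) y := by
  have h := (((hfd2 hf).differentiableAt.hasDerivAt).mul
      ((hG1d hβ hσ hδ (c := c) y).const_mul (2 * Kk β σh))).sub
    (((hfd1 hf).differentiableAt.hasDerivAt).mul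
      (((hG2d hβ hσ hδ (c := c) y).const_mul (2 * Kk β σh)).const_mul (2 * Kk β σh)))
  refine h.congr_deriv ?_
  rw [N2D]; ring

lemma hM1d (y : ℝ) : HasDerivAt (M1 β σh δ c f) (M1D β σh δ c f y) y := by
  rw [m1_eq hβ hσ hδ]
  exact (hN1d hβ hσ hδ hf y).div (hDdd hβ hσ hδ y) (hDne hβ hσ hδ y)

lemma hM2d (y : ℝ) : HasDerivAt (M2 β σh δ c f) (M2D β σh δ c f y) y := by
  rw [m2_eq hβ hσ hδ]
  exact (hN2d hβ hσ hδ hf y).div (hDdd hβ hσ hδ y) (hDne hβ hσ hδ y)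

lemma deriv_m1 : deriv (M1 β σh δ c f) = M1D β σh δ c f :=
  funext fun y => (hM1d hβ hσ hδ hf y).deriv

lemma deriv_m2 : deriv (M2 β σh δ c f) = M2D β σh δ c f :=
  funext fun y => (hM2d hβ hσ hδ hf y).deriv

omit hf
/-- the key identity Φ'·M₁' + Φ·M₂' = 0 -/
lemma key_identity (f : ℝ → ℝ) (y : ℝ) :
    2 * Kk β σh * G1 β σh δ c y * M1D β σh δ c f y +
      G0 β σh δ c y * M2D β σh δ c f y = 0 := by
  have hD := hDne hβ hσ hδ (c := c) y
  rw [M1D, M2D, N1D, N2D, N1, N2, DDp, Dd] at *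
  field_simp
  ring

end Main

section ContLemmas
variable {β σh δ c : ℝ} {f : ℝ → ℝ}
variable (hβ : 0 < β) (hσ : 0 < σh) (hδ : 0 < δ) (hf : ContDiff ℝ 2 f)
include hβ hσ hδ

lemma contU : Continuous (Uu β σh c) :=
  Differentiable.continuous fun x => (hUd hβ hσ hδ x).differentiableAt

lemma contFa (b : ℝ) (hb : -1 < b) : Continuous (Fa b) :=
  Differentiable.continuous fun x => (fa_hasDerivAt b hb x).differentiableAt

lemma contG0 : Continuous (G0 β σh δ c) :=
  (contFa hβ hσ hδ _ (ha1 hβ hσ hδ)).comp (contU hβ hσ hδ)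
lemma contG1 : Continuous (G1 β σh δ c) :=
  (contFa hβ hσ hδ _ (by linarith [ha1 hβ hσ hδ])).comp (contU hβ hσ hδ)
lemma contG2 : Continuous (G2 β σh δ c) :=
  (contFa hβ hσ hδ _ (by linarith [ha1 hβ hσ hδ])).comp (contU hβ hσ hδ)
lemma contG3 : Continuous (G3 β σh δ c) :=
  (contFa hβ hσ hδ _ (by linarith [ha1 hβ hσ hδ])).comp (contU hβ hσ hδ)

lemma contDd : Continuous (Dd (β := β) (σh := σh) (δ := δ) (c := c)) := by
  unfold Dd
  exact ((continuous_const.mul (contG1 hβ hσ hδ)).pow 2).sub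
    ((contG0 hβ hσ hδ).mul (continuous_const.mul (continuous_const.mul (contG2 hβ hσ hδ))))

include hf

lemma contM2 : Continuous (M2 β σh δ c f) := by
  rw [m2_eq hβ hσ hδ]
  apply Continuous.div _ (contDd hβ hσ hδ) (hDne hβ hσ hδ)
  unfold N2
  exact (((hfd2 hf).continuous).mul (continuous_const.mul (contG1 hβ hσ hδ))).sub
    (((hfd1 hf).continuous).mul
      (continuous_const.mul (continuous_const.mul (contG2 hβ hσ hδ))))

lemma contM1D : Continuous (M1D β σh δ c f) := by
  unfold M1D
  apply Continuous.div _ ((contDd hβ hσ hδ).pow 2)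
    (fun y => pow_ne_zero 2 (hDne hβ hσ hδ y))
  apply Continuous.sub
  · apply Continuous.mul _ (contDd hβ hσ hδ)
    unfold N1D
    exact (((hfd1 hf).continuous).mul
        (continuous_const.mul (continuous_const.mul (contG2 hβ hσ hδ)))).sub
      ((hfc2 hf).mul (contG0 hβ hσ hδ))
  · apply Continuous.mul
    · unfold N1
      exact (((hfd1 hf).continuous).mul (continuous_const.mul (contG1 hβ hσ hδ))).sub
        (((hfd2 hf).continuous).mul (contG0 hβ hσ hδ))
    · unfold DDp
      exact ((continuous_const.mul (contG1 hβ hσ hδ)).mul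
          (continuous_const.mul (continuous_const.mul (contG2 hβ hσ hδ)))).sub
        ((contG0 hβ hσ hδ).mul (continuous_const.mul (continuous_const.mul
          (continuous_const.mul (contG3 hβ hσ hδ)))))

end ContLemmas


/-- Along any solution `𝕪` of the boundary ODE `𝕪' = M₂(𝕪)/M₁'(𝕪)` on `[0,Θ]`, the function
`ℓ ↦ exp(𝕣(ℓ))·Φ(𝕪(ℓ))·M₂(𝕪(ℓ))` is constant, where
`𝕣(ℓ) = ∫₀^ℓ (1 - 𝕪'(x))·(Φ'(𝕪(x))/Φ(𝕪(x))) dx`. -/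
theorem exp_r_Phi_M2_constant (β σh δ c : ℝ) (hβ : 0 < β) (hσ : 0 < σh) (hδ : 0 < δ)
    (f : ℝ → ℝ) (hf : ContDiff ℝ 2 f)
    (Θ : ℝ) (hΘ : 0 < Θ) (Y Yd : ℝ → ℝ)
    (hYd : ∀ ℓ ∈ Set.Icc (0 : ℝ) Θ, HasDerivWithinAt Y (Yd ℓ) (Set.Icc 0 Θ) ℓ)
    (hM1' : ∀ ℓ ∈ Set.Icc (0 : ℝ) Θ, deriv (M1 β σh δ c f) (Y ℓ) ≠ 0)
    (hODE : ∀ ℓ ∈ Set.Icc (0 : ℝ) Θ,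
      Yd ℓ = M2 β σh δ c f (Y ℓ) / deriv (M1 β σh δ c f) (Y ℓ)) :
    let r : ℝ → ℝ := fun ℓ =>
      ∫ x in (0 : ℝ)..ℓ, (1 - Yd x) * (deriv (Phi β σh δ c) (Y x) / Phi β σh δ c (Y x));
    ∀ ℓ₁ ∈ Set.Icc (0 : ℝ) Θ, ∀ ℓ₂ ∈ Set.Icc (0 : ℝ) Θ,
      Real.exp (r ℓ₁) * Phi β σh δ c (Y ℓ₁) * M2 β σh δ c f (Y ℓ₁) =
      Real.exp (r ℓ₂) * Phi β σh δ c (Y ℓ₂) * M2 β σh δ c f (Y ℓ₂) := by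
  intro r ℓ₁ hℓ₁ ℓ₂ hℓ₂
  have hYc : ContinuousOn Y (Set.Icc 0 Θ) := fun x hx => (hYd x hx).continuousWithinAt
  set q : ℝ → ℝ := fun z =>
    (1 - Yd z) * (deriv (Phi β σh δ c) (Y z) / Phi β σh δ c (Y z)) with hq
  have hr : r = fun ℓ => ∫ x in (0:ℝ)..ℓ, q x := rfl
  set qt : ℝ → ℝ := fun z =>
    (1 - M2 β σh δ c f (Y z) / M1D β σh δ c f (Y z)) *
      (2 * Kk β σh * G1 β σh δ c (Y z) / G0 β σh δ c (Y z)) with hqt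
  have hM1Dne : ∀ ℓ ∈ Set.Icc (0:ℝ) Θ, M1D β σh δ c f (Y ℓ) ≠ 0 := by
    intro ℓ hℓ
    have := hM1' ℓ hℓ
    rwa [deriv_m1 hβ hσ hδ hf] at this
  have hqeq : Set.EqOn q qt (Set.Icc 0 Θ) := by
    intro z hz
    simp only [hq, hqt]
    rw [hODE z hz, deriv_m1 hβ hσ hδ hf]
    simp only [phi_deriv hβ hσ hδ]
    rw [phi_eq hβ hσ hδ]
  have hqtc : ContinuousOn qt (Set.Icc 0 Θ) := by
    apply ContinuousOn.mul
    · apply continuousOn_const.sub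
      exact ContinuousOn.div ((contM2 hβ hσ hδ hf).comp_continuousOn hYc)
        ((contM1D hβ hσ hδ hf).comp_continuousOn hYc) (fun z hz => hM1Dne z hz)
    · exact ContinuousOn.div
        ((continuous_const.mul (contG1 hβ hσ hδ)).comp_continuousOn hYc)
        ((contG0 hβ hσ hδ).comp_continuousOn hYc)
        (fun z hz => ne_of_gt (hG0pos hβ hσ hδ (Y z)))
  have hqint : IntegrableOn q (Set.Icc 0 Θ) := by
    apply ((hqtc.integrableOn_compact isCompact_Icc).congr_fun _ measurableSet_Icc)
    exact fun z hz => (hqeq hz).symm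
  have hq01 : ∀ x ∈ Set.Icc (0:ℝ) Θ, IntervalIntegrable q volume 0 x := by
    intro x hx
    rw [intervalIntegrable_iff_integrableOn_Ioc_of_le hx.1]
    exact hqint.mono_set (Set.Ioc_subset_Icc_self.trans (Set.Icc_subset_Icc le_rfl hx.2))
  have hrc : ContinuousOn r (Set.Icc 0 Θ) := by
    rw [hr]
    have h := intervalIntegral.continuousOn_primitive_interval (a := 0) (b := Θ)
      (f := q) (μ := volume) (by rwa [Set.uIcc_of_le hΘ.le])
    rwa [Set.uIcc_of_le hΘ.le] at h
  set Gb : ℝ → ℝ := fun ℓ =>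
    Real.exp (r ℓ) * Phi β σh δ c (Y ℓ) * M2 β σh δ c f (Y ℓ) with hGb
  have hGcont : ContinuousOn Gb (Set.Icc 0 Θ) := by
    apply ContinuousOn.mul
    · apply ContinuousOn.mul (hrc.rexp)
      rw [phi_eq hβ hσ hδ]
      exact (contG0 hβ hσ hδ).comp_continuousOn hYc
    · exact (contM2 hβ hσ hδ hf).comp_continuousOn hYc
  have hGderiv : ∀ x ∈ Set.Ico 0 Θ, HasDerivWithinAt Gb 0 (Set.Ici x) x := by
    intro x hx
    have hxI : x ∈ Set.Icc (0:ℝ) Θ := ⟨hx.1, hx.2.le⟩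
    have hIoc : Set.Ioc x Θ ∈ 𝓝[>] x := Ioc_mem_nhdsGT_of_mem ⟨le_refl x, hx.2⟩
    have hIccIoi : Set.Icc (0:ℝ) Θ ∈ 𝓝[>] x :=
      Filter.mem_of_superset hIoc (fun z hz => ⟨hx.1.trans hz.1.le, hz.2⟩)
    have hIccIci : Set.Icc (0:ℝ) Θ ∈ 𝓝[Set.Ici x] x := by
      apply mem_nhdsWithin.2 ⟨Set.Iio Θ, isOpen_Iio, hx.2, ?_⟩
      rintro z ⟨hz1, hz2⟩
      exact ⟨hx.1.trans hz2, hz1.le⟩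
    have hY' : HasDerivWithinAt Y (Yd x) (Set.Ici x) x :=
      (hYd x hxI).mono_of_mem_nhdsWithin hIccIci
    have hPhiY : HasDerivWithinAt (fun ℓ => Phi β σh δ c (Y ℓ))
        (2 * Kk β σh * G1 β σh δ c (Y x) * Yd x) (Set.Ici x) x := by
      rw [phi_eq hβ hσ hδ]
      exact (hG0d hβ hσ hδ (Y x)).comp_hasDerivWithinAt x hY'
    have hM2Y : HasDerivWithinAt (fun ℓ => M2 β σh δ c f (Y ℓ))
        (M2D β σh δ c f (Y x) * Yd x) (Set.Ici x) x :=
      (hM2d hβ hσ hδ hf (Y x)).comp_hasDerivWithinAt x hY'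
    have hmeasq : StronglyMeasurableAtFilter q (𝓝[>] x) volume :=
      ⟨Set.Ioc x Θ, hIoc, (hqint.mono_set
        (fun z hz => ⟨hx.1.trans hz.1.le, hz.2⟩)).aestronglyMeasurable⟩
    have hqcw : ContinuousWithinAt q (Set.Ioi x) x := by
      have h1 : ContinuousWithinAt qt (Set.Icc 0 Θ) x := hqtc x hxI
      have h2 : ContinuousWithinAt q (Set.Icc 0 Θ) x :=
        h1.congr (fun z hz => hqeq hz) (hqeq hxI)
      exact h2.mono_of_mem_nhdsWithin hIccIoi
    have hrd : HasDerivWithinAt r (q x) (Set.Ici x) x := by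
      rw [hr]
      exact intervalIntegral.integral_hasDerivWithinAt_right (hq01 x hxI) hmeasq hqcw
    have hG := ((hrd.exp.mul hPhiY).mul hM2Y)
    refine hG.congr_deriv ?_
    simp only [Pi.mul_apply]
    rw [hqeq hxI, hqt, hODE x hxI, deriv_m1 hβ hσ hδ hf]
    rw [phi_eq hβ hσ hδ]
    have hkey := key_identity hβ hσ hδ (c := c) f (Y x)
    have hg0 := ne_of_gt (hG0pos hβ hσ hδ (c := c) (Y x))
    have hm1 := hM1Dne x hxI
    have hm2d : M2D β σh δ c f (Y x) =
        -(2 * Kk β σh * G1 β σh δ c (Y x) * M1D β σh δ c f (Y x)) / G0 β σh δ c (Y x) := by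
      field_simp
      linarith [hkey]
    rw [hm2d]
    field_simp
    ring
  have hconst := constant_of_has_deriv_right_zero hGcont hGderiv
  exact (hconst ℓ₁ hℓ₁).trans (hconst ℓ₂ hℓ₂).symm
end
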